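/- For every integer n ≥ 1, (n+1)ⁿ/n! ≤ e^{1/8}·eⁿ/√(n+1). -/

import Mathlib

open Real

lemma quintic_log (x : ℝ) (hx : 0 ≤ x) :
    Real.log (1 + x) ≤ x - x^2/2 + x^3/3 - x^4/4 + x^5/5 := by
  set f : ℝ → ℝ := fun t => t - t^2/2 + t^3/3 - t^4/4 + t^5/5 - Real.log (1+t) with hf
  have hd : ∀ y : ℝ, 0 ≤ y → HasDerivAt f (y^5/(1+y)) y := by
    intro y hy
    have h1 : (0:ℝ) < 1 + y := by linarith
    have hp : HasDerivAt (fun t:ℝ => t - t^2/2 + t^3/3 - t^4/4 + t^5/5)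
        (1 - y + y^2 - y^3 + y^4) y := by
      have := ((((hasDerivAt_id y).sub ((hasDerivAt_pow 2 y).div_const 2)).add
        ((hasDerivAt_pow 3 y).div_const 3)).sub ((hasDerivAt_pow 4 y).div_const 4)).add
        ((hasDerivAt_pow 5 y).div_const 5)
      convert this using 1 <;> [rfl; rfl; rfl; skip]
      push_cast
      ring
    have hl : HasDerivAt (fun t:ℝ => Real.log (1+t)) (1/(1+y)) y := by
      have h2 : HasDerivAt (fun t:ℝ => 1 + t) 1 y := (hasDerivAt_id y).const_add 1
      simpa using h2.log (ne_of_gt h1)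
    have := hp.sub hl
    convert this using 1 <;> [rfl; rfl; rfl; skip]
    field_simp
    ring
  have mono : MonotoneOn f (Set.Ici 0) := by
    apply monotoneOn_of_deriv_nonneg (convex_Ici 0)
    · exact fun y hy => (hd y hy).continuousAt.continuousWithinAt
    · intro y hy
      rw [interior_Ici] at hy
      exact (hd y hy.le).differentiableAt.differentiableWithinAt
    · intro y hy
      rw [interior_Ici] at hy
      have hy' : (0:ℝ) < y := hy
      rw [(hd y hy'.le).deriv]
      exact div_nonneg (pow_nonneg hy'.le 5) (by linarith)
  have h0 : f 0 ≤ f x := mono (Set.mem_Ici.mpr le_rfl) (Set.mem_Ici.mpr hx) hx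
  have hf0 : f 0 = 0 := by simp [hf]
  rw [hf0, hf] at h0
  simp only at h0
  linarith

lemma step_ineq (m : ℝ) (hm : 2 ≤ m) :
    (m + 1/2) * Real.log (1 + 1/m) ≤ 1 + 1/(12*(m-1)) - 1/(12*m) := by
  have hm0 : (0:ℝ) < m := by linarith
  have hm1 : (0:ℝ) < m - 1 := by linarith
  have h := quintic_log (1/m) (by positivity)
  have hb : (m + 1/2) * Real.log (1 + 1/m) ≤
      (m + 1/2) * ((1/m) - (1/m)^2/2 + (1/m)^3/3 - (1/m)^4/4 + (1/m)^5/5) :=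
    mul_le_mul_of_nonneg_left h (by linarith)
  refine hb.trans ?_
  have e1 : (m + 1/2) * ((1/m) - (1/m)^2/2 + (1/m)^3/3 - (1/m)^4/4 + (1/m)^5/5)
      = 1 + 1/(12*m^2) - 1/(12*m^3) + 3/(40*m^4) + 1/(10*m^5) := by
    field_simp
    ring
  have e2 : 1 + 1/(12*(m-1)) - 1/(12*m) = 1 + 1/(12*m*(m-1)) := by
    field_simp
    ring
  rw [e1, e2]
  have s1 : 3/(40*m^4) + 1/(10*m^5) ≤ 1/(12*m^3) := by
    rw [div_add_div _ _ (by positivity) (by positivity),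
      div_le_div_iff₀ (by positivity) (by positivity)]
    nlinarith [pow_pos hm0 7, pow_pos hm0 8, pow_pos hm0 9, sq_nonneg m]
  have s2 : 1/(12*m^2) ≤ 1/(12*m*(m-1)) := by
    rw [div_le_div_iff₀ (by positivity) (by positivity)]
    nlinarith
  linarith

lemma main_aux (n : ℕ) (hn : 1 ≤ n) :
    ((n:ℝ)+1)^n * Real.sqrt ((n:ℝ)+1) ≤
      (n.factorial : ℝ) * Real.exp 1 ^ n * Real.exp (1/8 - 1/(12*(n:ℝ))) := by
  induction n, hn using Nat.le_induction with
  | base =>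
    have h2 : Real.sqrt 2 = Real.exp (Real.log 2 / 2) := by
      rw [← Real.log_sqrt (by norm_num : (0:ℝ) ≤ 2),
        Real.exp_log (Real.sqrt_pos.mpr (by norm_num))]
    have h2' : (2:ℝ) = Real.exp (Real.log 2) := (Real.exp_log (by norm_num)).symm
    have hlog2 : Real.log 2 < 0.6931471808 := Real.log_two_lt_d9
    have key : (2:ℝ) * Real.sqrt 2 ≤ Real.exp 1 * Real.exp (1/8 - 1/(12*(1:ℝ))) := by
      calc (2:ℝ) * Real.sqrt 2 = Real.exp (Real.log 2 + Real.log 2 / 2) := by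
            rw [Real.exp_add, ← h2, ← h2']
        _ ≤ Real.exp (25/24) := by
            apply Real.exp_le_exp.mpr; linarith
        _ = Real.exp 1 * Real.exp (1/8 - 1/(12*(1:ℝ))) := by
            rw [← Real.exp_add]; norm_num
    simpa [Nat.factorial, one_add_one_eq_two] using key
  | succ n hn ih =>
    have hn1 : (1:ℝ) ≤ (n:ℝ) := by exact_mod_cast hn
    have hm0 : (0:ℝ) < (n:ℝ)+1 := by linarith
    have hm2 : (2:ℝ) ≤ (n:ℝ)+1 := by linarith
    set m : ℝ := (n:ℝ)+1 with hmdef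
    have hmul : m * (1 + 1/m) = m + 1 := by field_simp
    have hL0 : (0:ℝ) < 1 + 1/m := by positivity
    -- express ratio as exponential
    have hpow : (1 + 1/m)^(n+1) = Real.exp (((n:ℝ)+1) * Real.log (1 + 1/m)) := by
      rw [← Real.rpow_natCast (1 + 1/m) (n+1), Real.rpow_def_of_pos hL0]
      push_cast
      ring_nf
    have hsqrt : Real.sqrt (1 + 1/m) = Real.exp (Real.log (1 + 1/m) / 2) := by
      rw [← Real.log_sqrt hL0.le, Real.exp_log (Real.sqrt_pos.mpr hL0)]
    have h3 : (1 + 1/m)^(n+1) * Real.sqrt (1 + 1/m) ≤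
        Real.exp 1 * Real.exp (1/(12*(n:ℝ)) - 1/(12*m)) := by
      rw [hpow, hsqrt, ← Real.exp_add, ← Real.exp_add]
      apply Real.exp_le_exp.mpr
      have := step_ineq m hm2
      have hnm : (n:ℝ) = m - 1 := by rw [hmdef]; ring
      rw [hnm]
      linarith
    -- decompose LHS
    have hsplit : ((↑(n+1):ℝ)+1)^(n+1) * Real.sqrt ((↑(n+1):ℝ)+1)
        = ((m^n * Real.sqrt m) * ((1 + 1/m)^(n+1) * Real.sqrt (1 + 1/m))) * m := by
      have hc : ((↑(n+1):ℝ)+1) = m + 1 := by push_cast; ring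
      rw [hc, ← hmul, mul_pow, Real.sqrt_mul hm0.le]
      ring
    rw [hsplit]
    have hA : (0:ℝ) ≤ m^n * Real.sqrt m := by positivity
    have hB : (0:ℝ) ≤ (1 + 1/m)^(n+1) * Real.sqrt (1 + 1/m) := by positivity
    have hIH : m^n * Real.sqrt m ≤
        (n.factorial : ℝ) * Real.exp 1 ^ n * Real.exp (1/8 - 1/(12*(n:ℝ))) := ih
    have hstep : (m^n * Real.sqrt m) * ((1 + 1/m)^(n+1) * Real.sqrt (1 + 1/m)) ≤
        ((n.factorial : ℝ) * Real.exp 1 ^ n * Real.exp (1/8 - 1/(12*(n:ℝ)))) *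
          (Real.exp 1 * Real.exp (1/(12*(n:ℝ)) - 1/(12*m))) :=
      mul_le_mul hIH h3 hB (by positivity)
    calc ((m^n * Real.sqrt m) * ((1 + 1/m)^(n+1) * Real.sqrt (1 + 1/m))) * m
        ≤ (((n.factorial : ℝ) * Real.exp 1 ^ n * Real.exp (1/8 - 1/(12*(n:ℝ)))) *
            (Real.exp 1 * Real.exp (1/(12*(n:ℝ)) - 1/(12*m)))) * m :=
          mul_le_mul_of_nonneg_right hstep hm0.le
      _ = (↑((n+1).factorial) : ℝ) * Real.exp 1 ^ (n+1) * Real.exp (1/8 - 1/(12*(↑(n+1):ℝ))) := by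
          have e3 : Real.exp (1/8 - 1/(12*(n:ℝ))) *
              (Real.exp 1 * Real.exp (1/(12*(n:ℝ)) - 1/(12*((n:ℝ)+1)))) =
              Real.exp 1 * Real.exp (1/8 - 1/(12*((n:ℝ)+1))) := by
            simp only [← Real.exp_add]
            congr 1
            ring
          rw [Nat.factorial_succ, hmdef]
          push_cast
          rw [pow_succ]
          linear_combination ((n.factorial : ℝ) * Real.exp 1 ^ n * ((n:ℝ)+1)) * e3

theorem stmt14 (n : ℕ) (hn : 1 ≤ n) :
    ((n : ℝ) + 1) ^ n / (n.factorial : ℝ) ≤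
      Real.exp (1 / 8) * Real.exp 1 ^ n / Real.sqrt ((n : ℝ) + 1) := by
  have hf : (0:ℝ) < (n.factorial : ℝ) := by exact_mod_cast n.factorial_pos
  have hs : (0:ℝ) < Real.sqrt ((n:ℝ)+1) := Real.sqrt_pos.mpr (by positivity)
  rw [div_le_div_iff₀ hf hs]
  have h1 := main_aux n hn
  have h2 : Real.exp (1/8 - 1/(12*(n:ℝ))) ≤ Real.exp (1/8) := by
    apply Real.exp_le_exp.mpr
    have : (0:ℝ) < 12*(n:ℝ) := by
      have : (1:ℝ) ≤ (n:ℝ) := by exact_mod_cast hn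
      linarith
    have : (0:ℝ) ≤ 1/(12*(n:ℝ)) := by positivity
    linarith
  calc ((n:ℝ)+1)^n * Real.sqrt ((n:ℝ)+1)
      ≤ (n.factorial : ℝ) * Real.exp 1 ^ n * Real.exp (1/8 - 1/(12*(n:ℝ))) := h1
    _ ≤ (n.factorial : ℝ) * Real.exp 1 ^ n * Real.exp (1/8) :=
        mul_le_mul_of_nonneg_left h2 (by positivity)
    _ = Real.exp (1/8) * Real.exp 1 ^ n * (n.factorial : ℝ) := by ring
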